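/- Let F be a finite field of odd cardinality q containing an element i with i² = −1, and let H be the subgroup of PSL₂(F) consisting of the classes of all upper triangular matrices [[u, x],[0, u⁻¹]] with u, x ∈ F and u⁴ = 1. Let φ̄ ∈ PSL₂(F) be the class of the matrix [[−1, 0],[1 − i, −1]] ∈ SL₂(F). Then the intersection H ∩ φ̄⁻¹ H φ̄ consists of exactly two elements: the identity, and the class of the matrix [[−i, i − 1],[0, i]]. -/

import Mathlib

open Matrix MatrixGroups

/-- The natural projection `SL₂(R) → PSL₂(R)`, sending a matrix to its class modulo
the center. -/
def pslmk {R : Type*} [CommRing R] :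
    Matrix.SpecialLinearGroup (Fin 2) R →* Matrix.ProjectiveSpecialLinearGroup (Fin 2) R :=
  QuotientGroup.mk' (Subgroup.center (Matrix.SpecialLinearGroup (Fin 2) R))

lemma diag_neg_one {F : Type*} [Field F] :
    (Matrix.diagonal fun _ : Fin 2 => (-1 : F)) = -1 := by
  have : (Matrix.diagonal fun _ : Fin 2 => (-1:F)) = -(Matrix.diagonal fun _ => (1:F)) := by
    ext a b
    by_cases hab : a = b <;> simp [Matrix.diagonal_apply, hab]
  rw [this, Matrix.diagonal_one]

lemma pslmk_eq_iff {F : Type*} [Field F] (M N : Matrix.SpecialLinearGroup (Fin 2) F) :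
    pslmk M = pslmk N ↔ (M : Matrix (Fin 2) (Fin 2) F) = N ∨ (M : Matrix (Fin 2) (Fin 2) F) = -N := by
  rw [pslmk, QuotientGroup.mk'_eq_mk']
  constructor
  · rintro ⟨z, hz, rfl⟩
    obtain ⟨r, hr, hrz⟩ := Matrix.SpecialLinearGroup.mem_center_iff.mp hz
    have hr2 : r ^ 2 = 1 := by simpa using hr
    have hr' : r = 1 ∨ r = -1 := by
      have h2 : (r - 1) * (r + 1) = 0 := by linear_combination hr2
      rcases mul_eq_zero.mp h2 with h | h
      · exact Or.inl (by linear_combination h)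
      · exact Or.inr (by linear_combination h)
    rcases hr' with rfl | rfl
    · left
      have hz1 : (z : Matrix (Fin 2) (Fin 2) F) = 1 := by simp [← hrz]
      simp [hz1]
    · right
      have hz1 : (z : Matrix (Fin 2) (Fin 2) F) = -1 := by
        rw [← hrz]; simp only [Matrix.scalar_apply]; exact diag_neg_one
      rw [Matrix.SpecialLinearGroup.coe_mul, hz1, mul_neg, mul_one, neg_neg]
  · rintro (h | h)
    · exact ⟨1, Subgroup.one_mem _, Subtype.ext (by simp [h])⟩
    · refine ⟨⟨-1, by
          rw [show (-1 : Matrix (Fin 2) (Fin 2) F) = Matrix.diagonal fun _ => -1 from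
            diag_neg_one.symm]
          simp [Matrix.det_diagonal, Fin.prod_univ_two]⟩, ?_, ?_⟩
      · exact Matrix.SpecialLinearGroup.mem_center_iff.mpr ⟨-1, by norm_num, by
          simp only [Matrix.scalar_apply]; exact diag_neg_one⟩
      · refine Subtype.ext ?_
        show (M : Matrix (Fin 2) (Fin 2) F) * (-1) = N
        rw [mul_neg, mul_one, h, neg_neg]

/-- Let `F` be a finite field of odd cardinality `q` containing `i` with `i² = -1`, let
`H ≤ PSL₂(F)` consist of the classes of the matrices `[[u, x], [0, u⁻¹]]` with `u⁴ = 1`,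
and let `φ̄` be the class of `[[-1, 0], [1 - i, -1]]`. Then `H ∩ φ̄⁻¹ H φ̄` consists
exactly of the identity and the class of `[[-i, i - 1], [0, i]]`. -/
theorem stab_inter_conj_stab (F : Type*) [Field F] [Fintype F]
    (q : ℕ) (hq : Fintype.card F = q) (hodd : Odd q)
    (i : F) (hi : i ^ 2 = -1)
    (H : Subgroup (Matrix.ProjectiveSpecialLinearGroup (Fin 2) F))
    (hH : (H : Set (Matrix.ProjectiveSpecialLinearGroup (Fin 2) F)) =
      {g | ∃ u x : F, u ^ 4 = 1 ∧ ∃ h : Matrix.det !![u, x; 0, u⁻¹] = 1,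
        g = pslmk ⟨!![u, x; 0, u⁻¹], h⟩})
    (φ ψ : Matrix.SpecialLinearGroup (Fin 2) F)
    (hφ : (φ : Matrix (Fin 2) (Fin 2) F) = !![-1, 0; 1 - i, -1])
    (hψ : (ψ : Matrix (Fin 2) (Fin 2) F) = !![-i, i - 1; 0, i]) :
    ((H ⊓ Subgroup.map (MulAut.conj ((pslmk φ)⁻¹)).toMonoidHom H :
        Subgroup (Matrix.ProjectiveSpecialLinearGroup (Fin 2) F)) :
      Set (Matrix.ProjectiveSpecialLinearGroup (Fin 2) F)) = {1, pslmk ψ} := by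
  have h2 : (2 : F) ≠ 0 := by
    intro h
    have hd : ringChar F ∣ 2 :=
      (CharP.cast_eq_zero_iff F (ringChar F) 2).mp (by exact_mod_cast h)
    rcases (Nat.dvd_prime Nat.prime_two).mp hd with h1 | h1
    · exact CharP.ringChar_ne_one h1
    · have := FiniteField.even_card_of_char_two h1
      rw [hq] at this
      rcases hodd with ⟨k, rfl⟩
      omega
  have hi0 : i ≠ 0 := by
    intro h
    rw [h] at hi
    norm_num at hi
  have hiinv : i⁻¹ = -i := inv_eq_of_mul_eq_one_right (by linear_combination -hi)
  have hninv : (-i)⁻¹ = i := inv_eq_of_mul_eq_one_right (by linear_combination -hi)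
  have memH : ∀ g, g ∈ H ↔ ∃ u x : F, u ^ 4 = 1 ∧
      ∃ h : Matrix.det !![u, x; 0, u⁻¹] = 1, g = pslmk ⟨!![u, x; 0, u⁻¹], h⟩ := by
    intro g
    rw [← SetLike.mem_coe, hH]
    rfl
  ext g
  simp only [SetLike.mem_coe, Subgroup.mem_inf, Subgroup.mem_map, MulEquiv.coe_toMonoidHom,
    MulAut.conj_apply, inv_inv, Set.mem_insert_iff, Set.mem_singleton_iff]
  constructor
  · rintro ⟨hg1, h, hh, hconj⟩
    obtain ⟨u, x, hu4, hdu, hgu⟩ := (memH g).mp hg1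
    obtain ⟨v, y, hv4, hdv, hhv⟩ := (memH h).mp hh
    have key : pslmk (φ * ⟨!![u, x; 0, u⁻¹], hdu⟩ * φ⁻¹) = pslmk ⟨!![v, y; 0, v⁻¹], hdv⟩ := by
      have hinv : pslmk φ⁻¹ = (pslmk φ)⁻¹ := map_inv pslmk φ
      erw [_root_.map_mul pslmk, _root_.map_mul pslmk, hinv, ← hgu, ← hhv, ← hconj]
      group
    erw [pslmk_eq_iff, Matrix.SpecialLinearGroup.coe_mul, Matrix.SpecialLinearGroup.coe_mul,
      Matrix.SpecialLinearGroup.coe_inv] at key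
    have key' : φ.1 * !![u, x; 0, u⁻¹] * φ.1.adjugate = !![v, y; 0, v⁻¹] ∨
        φ.1 * !![u, x; 0, u⁻¹] * φ.1.adjugate = -!![v, y; 0, v⁻¹] := key
    have e21 : (φ.1 * !![u, x; 0, u⁻¹] * φ.1.adjugate) 1 0 = 0 := by
      rcases key' with k | k <;> rw [k] <;> simp
    rw [show φ.1 = !![-1, 0; 1 - i, -1] from hφ, Matrix.adjugate_fin_two,
      Matrix.mul_fin_two, Matrix.mul_fin_two] at e21
    simp at e21
    have huu : u * u⁻¹ = 1 := by
      rw [Matrix.det_fin_two_of] at hdu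
      linear_combination hdu
    have hu0 : u ≠ 0 := left_ne_zero_of_mul_eq_one huu
    have h2i : (2 : F) * i ≠ 0 := mul_ne_zero h2 hi0
    have hcase : (u ^ 2 - 1) * (u ^ 2 + 1) = 0 := by linear_combination hu4
    rcases mul_eq_zero.mp hcase with hc | hc
    · -- u² = 1
      have hu2 : u ^ 2 = 1 := by linear_combination hc
      have huinv : u⁻¹ = u := inv_eq_of_mul_eq_one_right (by linear_combination hu2)
      rw [huinv] at e21
      have hx : x = 0 := by
        have hz : 2 * i * x = 0 := by linear_combination e21 + x * hi
        rcases mul_eq_zero.mp hz with h' | h'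
        · exact absurd h' h2i
        · exact h'
      left
      erw [hgu, ← _root_.map_one pslmk, pslmk_eq_iff]
      have hone : (u - 1) * (u + 1) = 0 := by linear_combination hu2
      rcases mul_eq_zero.mp hone with h' | h'
      · left
        show !![u, x; 0, u⁻¹] = (1 : Matrix.SpecialLinearGroup (Fin 2) F).1
        rw [huinv, hx, show u = 1 by linear_combination h']
        show _ = (1 : Matrix (Fin 2) (Fin 2) F)
        rw [Matrix.one_fin_two]
      · right
        show !![u, x; 0, u⁻¹] = -(1 : Matrix.SpecialLinearGroup (Fin 2) F).1
        rw [huinv, hx, show u = -1 by linear_combination h']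
        show _ = -(1 : Matrix (Fin 2) (Fin 2) F)
        rw [Matrix.one_fin_two]
        ext a b
        fin_cases a <;> fin_cases b <;> simp
    · -- u² = -1
      have hu2 : u ^ 2 = -1 := by linear_combination hc
      have huinv : u⁻¹ = -u := inv_eq_of_mul_eq_one_right (by linear_combination -hu2)
      rw [huinv] at e21
      have hx : x = -(u * (1 + i)) := by
        have hz : 2 * i * (x + u * (1 + i)) = 0 := by linear_combination e21 + (x + 2 * u) * hi
        rcases mul_eq_zero.mp hz with h' | h'
        · exact absurd h' h2i
        · linear_combination h'
      right
      erw [hgu, pslmk_eq_iff]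
      have hone : (u - i) * (u + i) = 0 := by linear_combination hu2 - hi
      rcases mul_eq_zero.mp hone with h' | h'
      · right
        show !![u, x; 0, u⁻¹] = -ψ.1
        rw [huinv, hx, show ψ.1 = !![-i, i - 1; 0, i] from hψ,
          show u = i by linear_combination h']
        ext a b
        fin_cases a <;> fin_cases b <;> simp <;>
          first
          | linear_combination hi
          | linear_combination -hi
          | linear_combination 2 * hi
          | linear_combination -2 * hi
          | ring
      · left
        show !![u, x; 0, u⁻¹] = ψ.1
        rw [huinv, hx, show ψ.1 = !![-i, i - 1; 0, i] from hψ,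
          show u = -i by linear_combination h']
        ext a b
        fin_cases a <;> fin_cases b <;> simp <;>
          first
          | linear_combination hi
          | linear_combination -hi
          | linear_combination 2 * hi
          | linear_combination -2 * hi
          | ring
  · rintro (rfl | rfl)
    · exact ⟨Subgroup.one_mem H, 1, Subgroup.one_mem H, by group⟩
    · have hdet1 : Matrix.det !![-i, i - 1; 0, (-i)⁻¹] = 1 := by
        rw [hninv, Matrix.det_fin_two_of]
        linear_combination -hi
      have hdet2 : Matrix.det !![i, i - 1; 0, i⁻¹] = 1 := by
        rw [hiinv, Matrix.det_fin_two_of]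
        linear_combination -hi
      have hu4a : (-i) ^ 4 = 1 := by linear_combination (i ^ 2 - 1) * hi
      have hu4b : i ^ 4 = 1 := by linear_combination (i ^ 2 - 1) * hi
      refine ⟨?_, pslmk ⟨!![i, i - 1; 0, i⁻¹], hdet2⟩, ?_, ?_⟩
      · rw [memH]
        refine ⟨-i, i - 1, hu4a, hdet1, congrArg pslmk (Subtype.ext ?_)⟩
        show (ψ : Matrix (Fin 2) (Fin 2) F) = !![-i, i - 1; 0, (-i)⁻¹]
        rw [hψ, hninv]
      · rw [memH]
        exact ⟨i, i - 1, hu4b, hdet2, rfl⟩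
      · have hinv : pslmk φ⁻¹ = (pslmk φ)⁻¹ := map_inv pslmk φ
        rw [← hinv]
        refine (pslmk_eq_iff (φ⁻¹ * ⟨!![i, i - 1; 0, i⁻¹], hdet2⟩ * φ) ψ).mpr ?_
        left
        erw [Matrix.SpecialLinearGroup.coe_mul, Matrix.SpecialLinearGroup.coe_mul,
          Matrix.SpecialLinearGroup.coe_inv]
        show φ.1.adjugate * !![i, i - 1; 0, i⁻¹] * φ.1 = ψ.1
        rw [show φ.1 = !![-1, 0; 1 - i, -1] from hφ, show ψ.1 = !![-i, i - 1; 0, i] from hψ,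
          Matrix.adjugate_fin_two, hiinv, Matrix.mul_fin_two, Matrix.mul_fin_two]
        ext a b
        fin_cases a <;> fin_cases b <;> simp <;>
          first
          | linear_combination hi
          | linear_combination -hi
          | linear_combination (1 - i) * hi
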